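/- Let g₁,...,g_N ∈ H²(ℂ₊) be mutually orthogonal nonzero vectors, λ₁ > ... > λ_N > 0, φ_j real, and suppose H_u g_j = λ_j e^{-iφ_j} g_j for an anti-linear operator H_u with H_u² g_j = λ_j² g_j. Let A be a bounded linear operator with Im A = (1/(4π))⟨·, g⟩g where g = Σ g_j, and suppose A* H_u = H_u A on the span of the g_j. Define ω_j = ⟨A H_u g_j, H_u g_j⟩. Then ω_j = λ_j² ⟨A g_j, g_j⟩ and Im ω_j = (λ_j²/(4π)) ‖g_j‖⁴ > 0. -/

import Mathlib

open ComplexConjugate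

/-- Positivity of `Im ω_j`: with mutually orthogonal nonzero `g_j`, an anti-linear symmetric
`H` with `H g_j = λ_j e^{-iφ_j} g_j`, `H² g_j = λ_j² g_j`, and `A` with
`Im A = (1/(4π)) ⟨·, g⟩ g` (`g = Σ g_j`) intertwining `A* H = H A` on the span of the `g_j`,
the numbers `ω_j = ⟨A H g_j, H g_j⟩` satisfy `ω_j = λ_j² ⟨A g_j, g_j⟩` and
`Im ω_j = (λ_j²/(4π)) ‖g_j‖⁴ > 0`.  (Inner products are linear in the first factor:
`⟨x,y⟩ = ⟪y,x⟫` in Mathlib's convention.) -/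
theorem omega_imaginary_part_positive
    {E : Type*} [NormedAddCommGroup E] [InnerProductSpace ℂ E] [FiniteDimensional ℂ E]
    (N : ℕ) (g : Fin N → E) (lam φ : Fin N → ℝ)
    (hgne : ∀ j, g j ≠ 0)
    (horth : ∀ j k, j ≠ k → (inner ℂ (g j) (g k) : ℂ) = 0)
    (hpos : ∀ j, 0 < lam j)
    (hdec : ∀ j k : Fin N, j < k → lam k < lam j)
    (H : E →ₛₗ[starRingEnd ℂ] E)
    (hsym : ∀ f h : E, (inner ℂ h (H f) : ℂ) = inner ℂ f (H h))
    (hHg : ∀ j, H (g j) = ((lam j : ℂ) * Complex.exp (-Complex.I * (φ j : ℂ))) • g j)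
    (hH2 : ∀ j, H (H (g j)) = (((lam j : ℂ)) ^ 2) • g j)
    (A : E →ₗ[ℂ] E)
    (hIm : ∀ f : E, A f - (LinearMap.adjoint A) f
        = (Complex.I / (2 * (Real.pi : ℂ))) • ((inner ℂ (∑ j, g j) f : ℂ) • ∑ j, g j))
    (hcomm : ∀ f ∈ Submodule.span ℂ (Set.range g),
      (LinearMap.adjoint A) (H f) = H (A f)) :
    ∀ j : Fin N,
      (inner ℂ (H (g j)) (A (H (g j))) : ℂ) = ((lam j : ℂ)) ^ 2 * inner ℂ (g j) (A (g j)) ∧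
      ((inner ℂ (H (g j)) (A (H (g j))) : ℂ)).im = (lam j) ^ 2 / (4 * Real.pi) * ‖g j‖ ^ 4 ∧
      0 < ((inner ℂ (H (g j)) (A (H (g j))) : ℂ)).im := by

  intro j
  have hπ : (Real.pi : ℝ) ≠ 0 := Real.pi_ne_zero
  set z : ℂ := inner ℂ (g j) (A (g j)) with hz
  have hgg : (inner ℂ (∑ k, g k) (g j) : ℂ) = ((‖g j‖ ^ 2 : ℝ) : ℂ) := by
    rw [sum_inner, Finset.sum_eq_single j]
    · rw [inner_self_eq_norm_sq_to_K]; norm_cast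
    · intro k _ hk; exact horth k j hk
    · simp
  have hgg' : (inner ℂ (g j) (∑ k, g k) : ℂ) = ((‖g j‖ ^ 2 : ℝ) : ℂ) := by
    rw [inner_sum, Finset.sum_eq_single j]
    · rw [inner_self_eq_norm_sq_to_K]; norm_cast
    · intro k _ hk; exact horth j k (Ne.symm hk)
    · simp
  have hadj : (inner ℂ (g j) ((LinearMap.adjoint A) (g j)) : ℂ) = conj z := by
    rw [LinearMap.adjoint_inner_right, ← inner_conj_symm, hz]
  have key : z - conj z
      = (Complex.I / (2 * (Real.pi : ℂ))) * (((‖g j‖ ^ 2 : ℝ) : ℂ) * ((‖g j‖ ^ 2 : ℝ) : ℂ)) := by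
    rw [← hadj, ← inner_sub_right, hIm, inner_smul_right, inner_smul_right, hgg, hgg']
  have him : z.im = ‖g j‖ ^ 4 / (4 * Real.pi) := by
    have key2 : ((2 * z.im : ℝ) : ℂ) * Complex.I
        = ((‖g j‖ ^ 4 / (2 * Real.pi) : ℝ) : ℂ) * Complex.I := by
      rw [← Complex.sub_conj, key]
      push_cast
      field_simp
    have key3 := mul_right_cancel₀ Complex.I_ne_zero key2
    have key4 := Complex.ofReal_injective key3
    field_simp at key4 ⊢
    linarith
  have hc : conj ((lam j : ℂ) * Complex.exp (-Complex.I * (φ j : ℂ)))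
      * ((lam j : ℂ) * Complex.exp (-Complex.I * (φ j : ℂ))) = ((lam j : ℂ)) ^ 2 := by
    rw [map_mul, ← Complex.exp_conj]
    have : conj (-Complex.I * (φ j : ℂ)) = Complex.I * (φ j : ℂ) := by
      simp [map_mul, Complex.conj_I]
    rw [this, Complex.conj_ofReal]
    have hex : Complex.exp (Complex.I * (φ j : ℂ)) * Complex.exp (-Complex.I * (φ j : ℂ)) = 1 := by
      have h0 : Complex.I * (φ j : ℂ) + -Complex.I * (φ j : ℂ) = 0 := by ring
      rw [← Complex.exp_add, h0, Complex.exp_zero]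
    calc (lam j : ℂ) * Complex.exp (Complex.I * (φ j : ℂ))
        * ((lam j : ℂ) * Complex.exp (-Complex.I * (φ j : ℂ)))
        = ((lam j : ℂ)) ^ 2 * (Complex.exp (Complex.I * (φ j : ℂ))
          * Complex.exp (-Complex.I * (φ j : ℂ))) := by ring
      _ = ((lam j : ℂ)) ^ 2 := by rw [hex, mul_one]
  have hω : (inner ℂ (H (g j)) (A (H (g j))) : ℂ) = ((lam j : ℂ)) ^ 2 * z := by
    rw [hHg, map_smul, inner_smul_left, inner_smul_right, ← mul_assoc, hc, hz]
  refine ⟨hω, ?_, ?_⟩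
  · rw [hω]
    have h3 : ((lam j : ℂ)) ^ 2 = ((lam j ^ 2 : ℝ) : ℂ) := by push_cast; ring
    rw [h3, Complex.im_ofReal_mul, him]
    ring
  · have h4 : (inner ℂ (H (g j)) (A (H (g j))) : ℂ).im
        = lam j ^ 2 / (4 * Real.pi) * ‖g j‖ ^ 4 := by
      rw [hω]
      have h3 : ((lam j : ℂ)) ^ 2 = ((lam j ^ 2 : ℝ) : ℂ) := by push_cast; ring
      rw [h3, Complex.im_ofReal_mul, him]; ring
    rw [h4]
    have h5 : 0 < lam j := hpos j
    have h6 : 0 < ‖g j‖ := norm_pos_iff.mpr (hgne j)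
    have := Real.pi_pos
    positivity
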